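/- Let m ≥ 3 be an odd integer and let ω be a complex number with Im ω ≠ 0. Then the symmetric improper integral lim_{R→∞} ∫_{-R}^{R} k^{m−1} / (ω − sign(k)·|k|^m) dk exists and equals −iπ/m if Im ω > 0, and +iπ/m if Im ω < 0. -/

import Mathlib

open MeasureTheory Complex Filter Topology

lemma sign_abs_pow (m : ℕ) (hm : m ≠ 0) (hodd : Odd m) (k : ℝ) :
    Real.sign k * |k| ^ m = k ^ m := by
  rcases lt_trichotomy k 0 with h | rfl | h
  · rw [Real.sign_of_neg h, abs_of_neg h, hodd.neg_pow]; ring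
  · simp [Real.sign_zero, zero_pow hm]
  · rw [Real.sign_of_pos h, abs_of_pos h, one_mul]

lemma ne_zero_aux (ω : ℂ) (him : ω.im ≠ 0) (x : ℝ) : ω - (x : ℂ) ≠ 0 := by
  intro h
  apply him
  have := congrArg Complex.im h
  simpa using this

lemma abs_add_tendsto (ω : ℂ) : Tendsto (fun S : ℝ => ‖ω + S‖) atTop atTop := by
  apply tendsto_atTop_mono (fun S => ?_) (tendsto_atTop_add_const_left _ ω.re tendsto_id)
  calc ω.re + S = (ω + (S:ℂ)).re := by simp
  _ ≤ ‖ω + S‖ := Complex.re_le_norm _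

lemma abs_sub_tendsto (ω : ℂ) : Tendsto (fun S : ℝ => ‖ω - S‖) atTop atTop := by
  apply tendsto_atTop_mono (fun S => ?_) (tendsto_atTop_add_const_left _ (-ω.re) tendsto_id)
  calc -ω.re + S = -((ω - (S:ℂ)).re) := by simp; ring
  _ ≤ |(ω - (S:ℂ)).re| := neg_le_abs _
  _ ≤ ‖ω - S‖ := Complex.abs_re_le_norm _

lemma arg_add_tendsto (ω : ℂ) : Tendsto (fun S : ℝ => Complex.arg (ω + S)) atTop (𝓝 0) := by
  have h2 : Tendsto (fun S : ℝ => ω.im / ‖ω + S‖) atTop (𝓝 0) :=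
    tendsto_const_nhds.div_atTop (abs_add_tendsto ω)
  have h1 : Tendsto (fun S : ℝ => Real.arcsin (ω.im / ‖ω + S‖)) atTop (𝓝 0) := by
    simpa [Function.comp_def] using (Real.continuous_arcsin.continuousAt (x := 0)).tendsto.comp h2
  apply h1.congr'
  filter_upwards [eventually_ge_atTop (-ω.re + 1)] with S hS
  have hre : 0 ≤ (ω + (S:ℂ)).re := by simp; linarith
  rw [Complex.arg_of_re_nonneg hre]
  simp

lemma arg_sub_tendsto_pos (ω : ℂ) (h : 0 < ω.im) :
    Tendsto (fun S : ℝ => Complex.arg (ω - S)) atTop (𝓝 Real.pi) := by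
  have h2 : Tendsto (fun S : ℝ => (-ω.im) / ‖ω - S‖) atTop (𝓝 0) :=
    tendsto_const_nhds.div_atTop (abs_sub_tendsto ω)
  have h1 : Tendsto (fun S : ℝ => Real.arcsin ((-ω.im) / ‖ω - S‖) + Real.pi)
      atTop (𝓝 Real.pi) := by
    have := ((Real.continuous_arcsin.continuousAt (x := 0)).tendsto.comp h2).add_const Real.pi
    simpa using this
  apply h1.congr'
  filter_upwards [eventually_ge_atTop (ω.re + 1)] with S hS
  have hre : (ω - (S:ℂ)).re < 0 := by simp; linarith
  have him : 0 ≤ (ω - (S:ℂ)).im := by simpa using h.le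
  rw [Complex.arg_of_re_neg_of_im_nonneg hre him]
  simp

lemma arg_sub_tendsto_neg (ω : ℂ) (h : ω.im < 0) :
    Tendsto (fun S : ℝ => Complex.arg (ω - S)) atTop (𝓝 (-Real.pi)) := by
  have h2 : Tendsto (fun S : ℝ => (-ω.im) / ‖ω - S‖) atTop (𝓝 0) :=
    tendsto_const_nhds.div_atTop (abs_sub_tendsto ω)
  have h1 : Tendsto (fun S : ℝ => Real.arcsin ((-ω.im) / ‖ω - S‖) - Real.pi)
      atTop (𝓝 (-Real.pi)) := by
    have := ((Real.continuous_arcsin.continuousAt (x := 0)).tendsto.comp h2).sub_const Real.pi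
    simpa using this
  apply h1.congr'
  filter_upwards [eventually_ge_atTop (ω.re + 1)] with S hS
  have hre : (ω - (S:ℂ)).re < 0 := by simp; linarith
  have him : (ω - (S:ℂ)).im < 0 := by simpa using h
  rw [Complex.arg_of_re_neg_of_im_neg hre him]
  simp

lemma ratio_tendsto (ω : ℂ) (him : ω.im ≠ 0) :
    Tendsto (fun S : ℝ => (ω + S) / (ω - S)) atTop (𝓝 (-1)) := by
  have hdiv : Tendsto (fun S : ℝ => ω / (S : ℂ)) atTop (𝓝 0) := by
    have h1 : Tendsto (fun S : ℝ => ((S⁻¹ : ℝ) : ℂ)) atTop (𝓝 0) := by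
      simpa [Function.comp_def, Complex.ofReal_inv] using
        (Complex.continuous_ofReal.tendsto 0).comp tendsto_inv_atTop_zero
    have := h1.const_mul ω
    simpa [div_eq_mul_inv, Complex.ofReal_inv] using this
  have key : Tendsto (fun S : ℝ => (ω / S + 1) / (ω / S - 1)) atTop (𝓝 (-1)) := by
    have := (hdiv.add_const 1).div (hdiv.sub_const 1) (by norm_num)
    simpa [Pi.div_def] using this
  apply key.congr'
  filter_upwards [eventually_gt_atTop (0:ℝ)] with S hS
  have hS0 : (S : ℂ) ≠ 0 := by exact_mod_cast hS.ne'
  have hden : ω - (S : ℂ) ≠ 0 := ne_zero_aux ω him S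
  field_simp

lemma logabs_tendsto (ω : ℂ) (him : ω.im ≠ 0) :
    Tendsto (fun S : ℝ => Real.log (‖ω + S‖) - Real.log (‖ω - S‖))
      atTop (𝓝 0) := by
  have h1 : Tendsto (fun S : ℝ => ‖(ω + S) / (ω - S)‖) atTop (𝓝 1) := by
    have := (continuous_norm.tendsto (-1)).comp (ratio_tendsto ω him)
    simpa [Function.comp_def, map_div₀] using this
  have h2 : Tendsto (fun S : ℝ => Real.log (‖(ω + S) / (ω - S)‖)) atTop (𝓝 0) := by
    have := ((Real.continuousAt_log (by norm_num : (1:ℝ) ≠ 0)).tendsto).comp h1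
    simpa [Function.comp_def] using this
  apply h2.congr'
  filter_upwards [eventually_gt_atTop (0:ℝ)] with S hS
  have hn : ω + (S:ℂ) ≠ 0 := by
    intro h; apply him; have := congrArg Complex.im h; simpa using this
  have hd : ω - (S:ℂ) ≠ 0 := ne_zero_aux ω him S
  rw [norm_div, Real.log_div (norm_ne_zero_iff.mpr hn) (norm_ne_zero_iff.mpr hd)]

lemma log_diff_tendsto (ω : ℂ) (him : ω.im ≠ 0) (A : ℝ)
    (harg : Tendsto (fun S : ℝ => Complex.arg (ω - S)) atTop (𝓝 A)) :
    Tendsto (fun S : ℝ => Complex.log (ω + S) - Complex.log (ω - S)) atTop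
      (𝓝 (-(A : ℂ) * Complex.I)) := by
  have hre := (Complex.continuous_ofReal.tendsto 0).comp (logabs_tendsto ω him)
  have harg2 := ((Complex.continuous_ofReal.tendsto _).comp
    ((arg_add_tendsto ω).sub harg)).mul_const Complex.I
  have hsum := hre.add harg2
  have heq : ∀ S : ℝ, Complex.log (ω + S) - Complex.log (ω - S) =
      ((Real.log (‖ω + S‖) - Real.log (‖ω - S‖) : ℝ) : ℂ) +
      ((Complex.arg (ω + S) - Complex.arg (ω - S) : ℝ) : ℂ) * Complex.I := by
    intro S
    rw [Complex.log, Complex.log]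
    push_cast
    ring
  refine Tendsto.congr (fun S => (heq S).symm) ?_
  convert hsum using 2 <;> push_cast <;> simp [Function.comp_def]


lemma ftc_step (m : ℕ) (hm : m ≠ 0) (hodd : Odd m) (ω : ℂ) (him : ω.im ≠ 0) (R : ℝ) :
    (∫ k in (-R)..R, (k : ℂ) ^ (m - 1) / (ω - (k : ℂ) ^ m)) =
      (m : ℂ)⁻¹ * (Complex.log (ω + (R : ℂ) ^ m) - Complex.log (ω - (R : ℂ) ^ m)) := by
  have himk : ∀ k : ℝ, (ω - (k : ℂ) ^ m).im ≠ 0 := by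
    intro k
    have h0 : ((k : ℂ) ^ m).im = 0 := by
      rw [show ((k : ℂ)) ^ m = ((k ^ m : ℝ) : ℂ) by push_cast; ring, Complex.ofReal_im]
    simpa [Complex.sub_im, h0] using him
  have hne : ∀ k : ℝ, ω - (k : ℂ) ^ m ≠ 0 := fun k h => himk k (by rw [h]; simp)
  have hmc : (m : ℂ) ≠ 0 := Nat.cast_ne_zero.mpr hm
  have hderiv : ∀ k ∈ Set.uIcc (-R) R,
      HasDerivAt (fun x : ℝ => -(m : ℂ)⁻¹ * Complex.log (ω - (x : ℂ) ^ m))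
        ((k : ℂ) ^ (m - 1) / (ω - (k : ℂ) ^ m)) k := by
    intro k _
    have h1 : HasDerivAt (fun x : ℝ => (x : ℂ) ^ m) ((m : ℂ) * (k : ℂ) ^ (m - 1)) k :=
      (hasDerivAt_pow m ((k : ℝ) : ℂ)).comp_ofReal
    have h2 : HasDerivAt (fun x : ℝ => ω - (x : ℂ) ^ m) (-((m : ℂ) * (k : ℂ) ^ (m - 1))) k :=
      h1.const_sub ω
    have hslit : ω - (k : ℂ) ^ m ∈ Complex.slitPlane :=
      Complex.mem_slitPlane_iff.mpr (Or.inr (himk k))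
    have h3 := ((Complex.hasDerivAt_log hslit).comp k h2).const_mul (-(m : ℂ)⁻¹)
    convert h3 using 1
    · rfl
    · rfl
    · field_simp [hne k, hmc]
  have hcont : Continuous fun k : ℝ => (k : ℂ) ^ (m - 1) / (ω - (k : ℂ) ^ m) := by
    apply Continuous.div
    · exact Complex.continuous_ofReal.pow _
    · exact continuous_const.sub (Complex.continuous_ofReal.pow _)
    · exact fun k => hne k
  rw [intervalIntegral.integral_eq_sub_of_hasDerivAt hderiv (hcont.intervalIntegrable _ _)]
  have hnegR : ((-R : ℝ) : ℂ) ^ m = -((R : ℂ) ^ m) := by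
    push_cast
    exact Odd.neg_pow hodd _
  rw [hnegR, sub_neg_eq_add]
  ring

/-- For an odd integer `m ≥ 3` and complex `ω` off the real axis, the symmetric
improper integral `lim_{R→∞} ∫_{-R}^{R} k^{m−1}/(ω − sign(k)|k|^m) dk` exists and
equals `−iπ/m` if `Im ω > 0` and `+iπ/m` if `Im ω < 0`. -/
theorem stmt2 (m : ℕ) (hm : 3 ≤ m) (hodd : Odd m) (ω : ℂ) (him : ω.im ≠ 0) :
    (0 < ω.im →
      Tendsto (fun R : ℝ => ∫ k in (-R)..R,
          (k : ℂ) ^ (m - 1) / (ω - ((Real.sign k * |k| ^ m : ℝ) : ℂ)))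
        atTop (𝓝 (-(((Real.pi / m : ℝ) : ℂ) * Complex.I)))) ∧
    (ω.im < 0 →
      Tendsto (fun R : ℝ => ∫ k in (-R)..R,
          (k : ℂ) ^ (m - 1) / (ω - ((Real.sign k * |k| ^ m : ℝ) : ℂ)))
        atTop (𝓝 (((Real.pi / m : ℝ) : ℂ) * Complex.I))) := by
  have hm0 : m ≠ 0 := by omega
  have hmc : (m : ℂ) ≠ 0 := Nat.cast_ne_zero.mpr hm0
  have hfun : (fun R : ℝ => ∫ k in (-R)..R,
      (k : ℂ) ^ (m - 1) / (ω - ((Real.sign k * |k| ^ m : ℝ) : ℂ))) =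
      fun R : ℝ => (m : ℂ)⁻¹ * (Complex.log (ω + (R : ℂ) ^ m) - Complex.log (ω - (R : ℂ) ^ m)) := by
    funext R
    rw [show (fun k : ℝ => (k : ℂ) ^ (m - 1) / (ω - ((Real.sign k * |k| ^ m : ℝ) : ℂ))) =
        fun k : ℝ => (k : ℂ) ^ (m - 1) / (ω - (k : ℂ) ^ m) from funext fun k => by
      rw [sign_abs_pow m hm0 hodd k]; push_cast; ring_nf]
    exact ftc_step m hm0 hodd ω him R
  rw [hfun]
  have hpow : Tendsto (fun R : ℝ => R ^ m) atTop atTop := tendsto_pow_atTop hm0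
  constructor
  · intro hpos
    have key := ((log_diff_tendsto ω him Real.pi
      (arg_sub_tendsto_pos ω hpos)).comp hpow).const_mul ((m : ℂ)⁻¹)
    have heq : (fun R : ℝ => (m : ℂ)⁻¹ *
        ((fun S : ℝ => Complex.log (ω + S) - Complex.log (ω - S)) ∘ fun R : ℝ => R ^ m) R) =
        fun R : ℝ => (m : ℂ)⁻¹ * (Complex.log (ω + (R : ℂ) ^ m) - Complex.log (ω - (R : ℂ) ^ m)) := by
      funext R
      simp only [Function.comp_apply]
      push_cast
      ring_nf
    rw [heq] at key
    convert key using 1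
    push_cast
    field_simp
  · intro hneg
    have key := ((log_diff_tendsto ω him (-Real.pi)
      (arg_sub_tendsto_neg ω hneg)).comp hpow).const_mul ((m : ℂ)⁻¹)
    have heq : (fun R : ℝ => (m : ℂ)⁻¹ *
        ((fun S : ℝ => Complex.log (ω + S) - Complex.log (ω - S)) ∘ fun R : ℝ => R ^ m) R) =
        fun R : ℝ => (m : ℂ)⁻¹ * (Complex.log (ω + (R : ℂ) ^ m) - Complex.log (ω - (R : ℂ) ^ m)) := by
      funext R
      simp only [Function.comp_apply]
      push_cast
      ring_nf
    rw [heq] at key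
    convert key using 1
    push_cast
    field_simp
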